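/- For any cellular automaton C (with standard radius-1 neighbourhood) and any constant T ∈ ℕ, there exists a cellular automaton C' such that for every input word w, C' accepts w at time |w| if and only if C accepts w at time |w| + T. (Constant acceleration: L_Id(C') = L_{Id+T}(C).) -/

import Mathlib

/-- A cellular automaton with radius-1 neighbourhood over the input alphabet `A` (playing the role of Σ). -/
structure CellAuto (A : Type) where
  Q : Type
  fin : Fintype Q
  embed : A → Q
  quiescent : Q
  accept : Set Q
  δ : Q → Q → Q → Q
  quiescent_fix : δ quiescent quiescent quiescent = quiescent

namespace CellAuto

variable {A : Type}

/-- One synchronous update step. -/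
def step (C : CellAuto A) (𝔠 : ℤ → C.Q) : ℤ → C.Q :=
  fun c => C.δ (𝔠 (c - 1)) (𝔠 c) (𝔠 (c + 1))

/-- The initial configuration associated to an input word `w`:
letters on cells `0, …, |w| - 1`, quiescent state elsewhere. -/
def initConfig (C : CellAuto A) (w : List A) : ℤ → C.Q :=
  fun c => if h : 0 ≤ c ∧ c < w.length
    then C.embed (w.get ⟨c.toNat, by omega⟩)
    else C.quiescent

/-- `C` accepts `w` at time `t` iff cell `0` is in an accepting state at time `t`. -/
def accepts (C : CellAuto A) (w : List A) (t : ℕ) : Prop :=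
  C.step^[t] (C.initConfig w) 0 ∈ C.accept

end CellAuto

namespace Speedup

variable {A : Type} (C : CellAuto A) (T : ℕ)

/-- Row `t` of the space-time diagram of `C` on input `w`. -/
def Row (w : List A) (t : ℕ) (d : ℤ) : C.Q := C.step^[t] (C.initConfig w) d

lemma Row_succ (w : List A) (t : ℕ) (d : ℤ) :
    Row C w (t+1) d = C.δ (Row C w t (d-1)) (Row C w t d) (Row C w t (d+1)) := by
  simp only [Row, Function.iterate_succ_apply']
  rfl

/-- Locality: `k` steps only look at radius `k`. -/
lemma step_local (k : ℕ) : ∀ (α β : ℤ → C.Q) (d : ℤ),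
    (∀ j, d - k ≤ j → j ≤ d + k → α j = β j) → C.step^[k] α d = C.step^[k] β d := by
  induction k with
  | zero => intro α β d h; simpa using h d (by omega) (by omega)
  | succ k ih =>
    intro α β d h
    rw [Function.iterate_succ_apply, Function.iterate_succ_apply]
    refine ih _ _ d ?_
    intro j h1 h2
    show C.δ (α (j-1)) (α j) (α (j+1)) = C.δ (β (j-1)) (β j) (β (j+1))
    rw [h (j-1) (by push_cast; omega) (by push_cast; omega),
        h j (by push_cast; omega) (by push_cast; omega),
        h (j+1) (by push_cast; omega) (by push_cast; omega)]

lemma Row_left (w : List A) (t : ℕ) : ∀ d : ℤ, d + t < 0 → Row C w t d = C.quiescent := by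
  induction t with
  | zero =>
    intro d hd
    simp only [Row, Function.iterate_zero, id, CellAuto.initConfig]
    rw [dif_neg]; omega
  | succ t ih =>
    intro d hd
    rw [Row_succ, ih (d-1) (by omega), ih d (by omega), ih (d+1) (by omega)]
    exact C.quiescent_fix

lemma Row_right (w : List A) (t : ℕ) :
    ∀ d : ℤ, (w.length : ℤ) ≤ d - t → Row C w t d = C.quiescent := by
  induction t with
  | zero =>
    intro d hd
    simp only [Row, Function.iterate_zero, id, CellAuto.initConfig]
    rw [dif_neg]; push_cast at hd ⊢; omega
  | succ t ih =>
    intro d hd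
    rw [Row_succ, ih (d-1) (by push_cast at hd ⊢; omega), ih d (by push_cast at hd ⊢; omega),
      ih (d+1) (by push_cast at hd ⊢; omega)]
    exact C.quiescent_fix

lemma Row_nil (t : ℕ) (d : ℤ) : Row C [] t d = C.quiescent := by
  induction t generalizing d with
  | zero =>
    simp only [Row, Function.iterate_zero, id, CellAuto.initConfig]
    rw [dif_neg]; simp
  | succ t ih => rw [Row_succ, ih, ih, ih]; exact C.quiescent_fix

/-- Table of (possibly unknown) values of the current row on a window of radius `T`. -/
def Tbl := Fin (2*T+1) → Option C.Q

instance : Fintype (Tbl C T) := by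
  unfold Tbl; letI := C.fin; infer_instance

/-- Table lookup at relative offset `j ∈ [-T, T]`. -/
def tget (g : Tbl C T) (j : ℤ) : Option C.Q :=
  if h : 0 ≤ j + T ∧ j + T < 2*T+1 then g ⟨(j + T).toNat, by omega⟩ else none

lemma tget_out (g : Tbl C T) (j : ℤ) (h : ¬ (-(T:ℤ) ≤ j ∧ j ≤ T)) : tget C T g j = none := by
  rw [tget, dif_neg]; omega

/-- State set of the accelerated automaton. -/
abbrev Q' := Option A ⊕ Tbl C T

instance [Fintype A] : Fintype (Q' C T) := by
  unfold Q'; infer_instance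

def isRB : Q' C T → Bool
  | .inl none => true
  | _ => false

def srcL (l : Q' C T) (i : ℤ) : Option C.Q :=
  match l with
  | .inl (some a) => if i = -1 then some (C.embed a) else none
  | .inl none => if i ≤ -1 then some C.quiescent else none
  | .inr g => tget C T g (i+1)

def srcR (r : Q' C T) (i : ℤ) : Option C.Q :=
  match r with
  | .inl (some a) => if i = 1 then some (C.embed a) else none
  | .inl none => if 1 ≤ i then some C.quiescent else none
  | .inr g => tget C T g (i-1)

def srcX (l x r : Q' C T) (i : ℤ) : Option C.Q :=
  match x with
  | .inl (some a) => if i = 0 then some (C.embed a) else none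
  | .inl none =>
      if isRB C T l = false then (if 0 ≤ i then some C.quiescent else none)
      else if isRB C T r = false then (if i ≤ 0 then some C.quiescent else none)
      else none
  | .inr g => tget C T g i

def src (l x r : Q' C T) (i : ℤ) : Option C.Q :=
  match srcL C T l i with
  | some v => some v
  | none => match srcX C T l x r i with
    | some v => some v
    | none => srcR C T r i

lemma src_isSome (l x r : Q' C T) (i : ℤ)
    (h : (srcL C T l i).isSome ∨ (srcX C T l x r i).isSome ∨ (srcR C T r i).isSome) :
    (src C T l x r i).isSome := by
  unfold src
  rcases hL : srcL C T l i with _ | v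
  · rcases hX : srcX C T l x r i with _ | v
    · simp [hL, hX] at h; simpa using h
    · simp
  · simp

lemma src_cases (l x r : Q' C T) (i : ℤ) (v : C.Q) (h : src C T l x r i = some v) :
    srcL C T l i = some v ∨ srcX C T l x r i = some v ∨ srcR C T r i = some v := by
  unfold src at h
  rcases hL : srcL C T l i with _ | u <;> rw [hL] at h
  · rcases hX : srcX C T l x r i with _ | u <;> rw [hX] at h
    · exact Or.inr (Or.inr h)
    · exact Or.inr (Or.inl h)
  · exact Or.inl h

def node (l x r : Q' C T) (j : ℤ) : Option C.Q :=
  match src C T l x r (j-1), src C T l x r j, src C T l x r (j+1) with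
  | some a, some b, some c => some (C.δ a b c)
  | _, _, _ => none

lemma node_isSome (l x r : Q' C T) (j : ℤ)
    (h1 : (src C T l x r (j-1)).isSome) (h2 : (src C T l x r j).isSome)
    (h3 : (src C T l x r (j+1)).isSome) : (node C T l x r j).isSome := by
  unfold node
  rcases ha : src C T l x r (j-1) with _|a; · simp [ha] at h1
  rcases hb : src C T l x r j with _|b; · simp [hb] at h2
  rcases hc : src C T l x r (j+1) with _|c; · simp [hc] at h3
  simp

lemma node_eq_some (l x r : Q' C T) (j : ℤ) (v : C.Q) (h : node C T l x r j = some v) :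
    ∃ a b c, src C T l x r (j-1) = some a ∧ src C T l x r j = some b ∧
      src C T l x r (j+1) = some c ∧ v = C.δ a b c := by
  unfold node at h
  rcases ha : src C T l x r (j-1) with _|a <;> rw [ha] at h
  · exact absurd h (by simp)
  rcases hb : src C T l x r j with _|b <;> rw [hb] at h
  · exact absurd h (by simp)
  rcases hc : src C T l x r (j+1) with _|c <;> rw [hc] at h
  · exact absurd h (by simp)
  exact ⟨a, b, c, rfl, rfl, rfl, by injection h with h; exact h.symm⟩

def delta' (l x r : Q' C T) : Q' C T :=
  match l, x, r with
  | .inl none, .inl none, .inl none => .inl none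
  | _, _, _ => .inr (fun o => node C T l x r ((o : ℤ) - T))

lemma delta'_rb : delta' C T (.inl none) (.inl none) (.inl none) = .inl none := rfl

lemma delta'_not_rb (l x r : Q' C T)
    (h : ¬ (l = .inl none ∧ x = .inl none ∧ r = .inl none)) :
    delta' C T l x r = .inr (fun o => node C T l x r ((o : ℤ) - T)) := by
  unfold delta'
  split
  · exact absurd ⟨rfl, rfl, rfl⟩ h
  · rfl

/-- The accelerated automaton. -/
def Cacc [Fintype A] : CellAuto A where
  Q := Q' C T
  fin := inferInstance
  embed a := .inl (some a)
  quiescent := .inl none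
  accept := {s | match s with
    | .inl none => C.quiescent ∈ C.accept
    | .inl (some _) => False
    | .inr g => C.step^[T] (fun j => (tget C T g j).getD C.quiescent) 0 ∈ C.accept}
  δ := delta' C T
  quiescent_fix := rfl

section Invariant

variable [Fintype A]
set_option linter.unusedSectionVars false

/-- Space-time diagram of the accelerated automaton. -/
def cfg (w : List A) (t : ℕ) : ℤ → Q' C T :=
  (Cacc C T).step^[t] ((Cacc C T).initConfig w)

lemma cfg_zero (w : List A) (c : ℤ) :
    cfg C T w 0 c = if h : 0 ≤ c ∧ c < (w.length:ℤ)
      then .inl (some (w.get ⟨c.toNat, by omega⟩)) else .inl none := by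
  show (Cacc C T).initConfig w c = _
  unfold CellAuto.initConfig
  split <;> rfl

lemma cfg_succ (w : List A) (t : ℕ) (c : ℤ) :
    cfg C T w (t+1) c
      = delta' C T (cfg C T w t (c-1)) (cfg C T w t c) (cfg C T w t (c+1)) := by
  show ((Cacc C T).step^[t+1] _) c = _
  rw [Function.iterate_succ_apply']
  rfl

/-- The master invariant. -/
structure Good (w : List A) (t : ℕ) : Prop where
  rb : ∀ c : ℤ, cfg C T w t c = .inl none ↔
    ∀ d : ℤ, c - t ≤ d → d ≤ c + t → ¬(0 ≤ d ∧ d < (w.length:ℤ))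
  noRaw : ∀ (c : ℤ) (a : A), t ≠ 0 → cfg C T w t c ≠ .inl (some a)
  sound : ∀ (c : ℤ) g, cfg C T w t c = .inr g →
    ∀ (j : ℤ) v, tget C T g j = some v → v = Row C w t (c + j)
  center : ∀ (c : ℤ) g, cfg C T w t c = .inr g → (tget C T g 0).isSome
  lefts : ∀ c : ℤ, 1 ≤ (w.length:ℤ) → c - t ≤ -1 → 0 ≤ c + t →
    ∃ g, cfg C T w t c = .inr g ∧ ∀ j : ℤ, -(T:ℤ) ≤ j → j ≤ 0 → (tget C T g j).isSome
  rights : ∀ c : ℤ, 1 ≤ (w.length:ℤ) → c - t ≤ (w.length:ℤ) - 1 → (w.length:ℤ) ≤ c + t →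
    ∃ g, cfg C T w t c = .inr g ∧ ∀ j : ℤ, 0 ≤ j → j ≤ T → (tget C T g j).isSome

lemma good_zero (w : List A) : Good C T w 0 := by
  constructor
  · intro c
    rw [cfg_zero]
    split
    case isTrue h =>
      constructor
      · intro h'; injection h' with h'; injection h'
      · intro hall; exact absurd h (hall c (by simp) (by simp))
    case isFalse h =>
      constructor
      · intro _ d h1 h2 hw
        simp only [Nat.cast_zero] at h1 h2
        omega
      · intro _; rfl
  · intro c a h0; exact absurd rfl h0
  · intro c g h; rw [cfg_zero] at h; split at h <;> injection h
  · intro c g h; rw [cfg_zero] at h; split at h <;> injection h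
  · intro c _ h1 h2; simp only [Nat.cast_zero] at h1 h2; omega
  · intro c hlen h1 h2; simp only [Nat.cast_zero] at h1 h2; omega

lemma notRB_witness {w : List A} {t : ℕ} (G : Good C T w t) (m : ℤ)
    (h : cfg C T w t m ≠ .inl none) :
    ∃ d : ℤ, m - t ≤ d ∧ d ≤ m + t ∧ 0 ≤ d ∧ d < (w.length:ℤ) := by
  by_contra hc
  push_neg at hc
  apply h
  rw [G.rb m]
  intro d h1 h2 hw
  have := hc d h1 h2 hw.1
  omega

lemma RB_side {w : List A} {t : ℕ} (G : Good C T w t) (m : ℤ)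
    (h : cfg C T w t m = .inl none) (hn : 1 ≤ (w.length:ℤ)) :
    m + t ≤ -1 ∨ (w.length:ℤ) ≤ m - t := by
  have hm := (G.rb m).mp h
  by_contra hc
  push_neg at hc
  rcases le_or_gt 0 (m - t) with h' | h'
  · exact hm (m - t) (by omega) (by omega) ⟨h', by omega⟩
  · exact hm 0 (by omega) (by omega) ⟨le_refl 0, hn⟩

lemma raw_at {w : List A} (m : ℤ) (a : A) (h : cfg C T w 0 m = .inl (some a)) :
    0 ≤ m ∧ m < (w.length:ℤ) ∧ C.initConfig w m = C.embed a := by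
  rw [cfg_zero] at h
  split at h
  case isTrue hm =>
    injection h with h
    injection h with h
    refine ⟨hm.1, hm.2, ?_⟩
    rw [CellAuto.initConfig, dif_pos (by exact_mod_cast hm), h]
  case isFalse hm => injection h with h; injection h

lemma tget_build (F : ℤ → Option C.Q) (j : ℤ) :
    tget C T (fun o => F ((o:ℤ) - T)) j
      = if -(T:ℤ) ≤ j ∧ j ≤ T then F j else none := by
  by_cases h : 0 ≤ j + T ∧ j + T < 2*T+1
  · unfold tget; rw [dif_pos h, if_pos (by omega)]
    show F ((((j+T).toNat : ℕ) : ℤ) - T) = F j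
    congr 1
    omega
  · unfold tget; rw [dif_neg h, if_neg (by omega)]

section Eqns
variable {l x r : Q' C T} {i : ℤ}
lemma srcL_some (a : A) : srcL C T (.inl (some a)) i = if i = -1 then some (C.embed a) else none := rfl
lemma srcL_rb : srcL C T (.inl none) i = if i ≤ -1 then some C.quiescent else none := rfl
lemma srcL_tbl (g : Tbl C T) : srcL C T (.inr g) i = tget C T g (i+1) := rfl
lemma srcR_some (a : A) : srcR C T (.inl (some a)) i = if i = 1 then some (C.embed a) else none := rfl
lemma srcR_rb : srcR C T (.inl none) i = if 1 ≤ i then some C.quiescent else none := rfl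
lemma srcR_tbl (g : Tbl C T) : srcR C T (.inr g) i = tget C T g (i-1) := rfl
lemma srcX_some (a : A) : srcX C T l (.inl (some a)) r i = if i = 0 then some (C.embed a) else none := rfl
lemma srcX_rb : srcX C T l (.inl none) r i =
    (if isRB C T l = false then (if 0 ≤ i then some C.quiescent else none)
     else if isRB C T r = false then (if i ≤ 0 then some C.quiescent else none)
     else none) := rfl
lemma srcX_tbl (g : Tbl C T) : srcX C T l (.inr g) r i = tget C T g i := rfl
lemma isRB_rb : isRB C T (.inl none) = true := rfl
lemma isRB_some (a : A) : isRB C T (.inl (some a)) = false := rfl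
lemma isRB_tbl (g : Tbl C T) : isRB C T (.inr g) = false := rfl
end Eqns

lemma inl_some_ne (a : A) : (Sum.inl (some a) : Q' C T) ≠ .inl none := by
  intro hh; injection hh with hh2; cases hh2

lemma inr_ne (g : Tbl C T) : (Sum.inr g : Q' C T) ≠ .inl none := by
  intro hh; injection hh

lemma len_pos {w : List A} (hw : w ≠ []) : 1 ≤ (w.length : ℤ) := by
  have := List.length_pos_iff.mpr hw
  omega

lemma src_sound {w : List A} {t : ℕ} (G : Good C T w t) (c : ℤ)
    (H : ¬(cfg C T w t (c-1) = .inl none ∧ cfg C T w t c = .inl none ∧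
           cfg C T w t (c+1) = .inl none)) (i : ℤ) (v : C.Q)
    (h : src C T (cfg C T w t (c-1)) (cfg C T w t c) (cfg C T w t (c+1)) i = some v) :
    v = Row C w t (c + i) := by
  rcases src_cases C T _ _ _ i v h with hL | hX | hR
  · -- value coming from the left neighbour
    rcases hl : cfg C T w t (c-1) with (_|a) | g <;> rw [hl] at hL
    · -- blank left neighbour
      rw [srcL_rb] at hL
      split at hL
      case isFalse => injection hL
      case isTrue hi =>
        injection hL with hL
        subst hL
        by_cases hw : w = []
        · subst hw; rw [Row_nil]
        · have hn := len_pos (w := w) hw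
          rcases RB_side C T G (c-1) hl hn with hside | hside
          · exact (Row_left C w t (c+i) (by omega)).symm
          · exfalso
            apply H
            refine ⟨hl, (G.rb c).mpr ?_, (G.rb (c+1)).mpr ?_⟩ <;>
              · intro d h1 h2 hwd; omega
    · -- letter left neighbour (time 0)
      rw [srcL_some] at hL
      split at hL
      case isFalse => injection hL
      case isTrue hi =>
        subst hi
        injection hL with hL
        rcases Nat.eq_zero_or_pos t with rfl | ht
        · obtain ⟨h0, h1', he⟩ := raw_at C T (c-1) a hl
          rw [← hL]
          have hcc : c + (-1 : ℤ) = c - 1 := by ring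
          rw [hcc]
          show C.embed a = C.initConfig w (c-1)
          exact he.symm
        · exact absurd hl (G.noRaw (c-1) a (by omega))
    · -- table left neighbour
      rw [srcL_tbl] at hL
      have := G.sound (c-1) g hl (i+1) v hL
      rw [this]
      congr 1
      ring
  · -- value coming from the centre
    rcases hx : cfg C T w t c with (_|a) | g <;> rw [hx] at hX
    · -- blank centre
      rw [srcX_rb] at hX
      rcases hl : cfg C T w t (c-1) with (_|al) | gl <;> rw [hl] at hX
      · rw [isRB_rb] at hX
        rw [if_neg (by simp)] at hX
        rcases hr : cfg C T w t (c+1) with (_|ar) | gr <;> rw [hr] at hX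
        · rw [isRB_rb, if_neg (by simp)] at hX
          injection hX
        all_goals {
          first
            | rw [isRB_some, if_pos rfl] at hX
            | rw [isRB_tbl, if_pos rfl] at hX
          split at hX
          case isFalse => injection hX
          case isTrue hi =>
            injection hX with hX
            subst hX
            have hrr : cfg C T w t (c+1) ≠ .inl none := by
              rw [hr]
              first
                | exact inl_some_ne C T _
                | exact inr_ne C T _
            obtain ⟨d₀, hd1, hd2, hd3, hd4⟩ := notRB_witness C T G (c+1) hrr
            have hn : 1 ≤ (w.length:ℤ) := by omega
            rcases RB_side C T G c hx hn with hs | hs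
            · exact (Row_left C w t (c+i) (by omega)).symm
            · exfalso; omega
        }
      all_goals {
        first
          | rw [isRB_some, if_pos rfl] at hX
          | rw [isRB_tbl, if_pos rfl] at hX
        split at hX
        case isFalse => injection hX
        case isTrue hi =>
          injection hX with hX
          subst hX
          have hll : cfg C T w t (c-1) ≠ .inl none := by
            rw [hl]
            first
              | exact inl_some_ne C T _
              | exact inr_ne C T _
          obtain ⟨d₀, hd1, hd2, hd3, hd4⟩ := notRB_witness C T G (c-1) hll
          have hn : 1 ≤ (w.length:ℤ) := by omega
          rcases RB_side C T G c hx hn with hs | hs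
          · exfalso; omega
          · exact (Row_right C w t (c+i) (by omega)).symm
      }
    · -- letter centre (time 0)
      rw [srcX_some] at hX
      split at hX
      case isFalse => injection hX
      case isTrue hi =>
        subst hi
        injection hX with hX
        rcases Nat.eq_zero_or_pos t with rfl | ht
        · obtain ⟨h0, h1', he⟩ := raw_at C T c a hx
          rw [← hX]
          have hcc : c + (0 : ℤ) = c := by ring
          rw [hcc]
          show C.embed a = C.initConfig w c
          exact he.symm
        · exact absurd hx (G.noRaw c a (by omega))
    · rw [srcX_tbl] at hX
      exact G.sound c g hx i v hX
  · -- value coming from the right neighbour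
    rcases hr : cfg C T w t (c+1) with (_|a) | g <;> rw [hr] at hR
    · rw [srcR_rb] at hR
      split at hR
      case isFalse => injection hR
      case isTrue hi =>
        injection hR with hR
        subst hR
        by_cases hw : w = []
        · subst hw; rw [Row_nil]
        · have hn := len_pos (w := w) hw
          rcases RB_side C T G (c+1) hr hn with hside | hside
          · exfalso
            apply H
            refine ⟨(G.rb (c-1)).mpr ?_, (G.rb c).mpr ?_, hr⟩ <;>
              · intro d h1 h2 hwd; omega
          · exact (Row_right C w t (c+i) (by omega)).symm
    · rw [srcR_some] at hR
      split at hR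
      case isFalse => injection hR
      case isTrue hi =>
        subst hi
        injection hR with hR
        rcases Nat.eq_zero_or_pos t with rfl | ht
        · obtain ⟨h0, h1', he⟩ := raw_at C T (c+1) a hr
          rw [← hR]
          show C.embed a = C.initConfig w (c+1)
          exact he.symm
        · exact absurd hr (G.noRaw (c+1) a (by omega))
    · rw [srcR_tbl] at hR
      have := G.sound (c+1) g hr (i-1) v hR
      rw [this]
      congr 1
      ring

lemma srcm1_some (l x r : Q' C T)
    (hctr : ∀ g, l = .inr g → (tget C T g 0).isSome) : (src C T l x r (-1)).isSome := by
  apply src_isSome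
  left
  rcases l with (_|al) | gl
  · rw [srcL_rb, if_pos (by omega)]; simp
  · rw [srcL_some, if_pos rfl]; simp
  · rw [srcL_tbl]
    have e : (-1 : ℤ) + 1 = 0 := by norm_num
    rw [e]
    exact hctr gl rfl

lemma src1_some (l x r : Q' C T)
    (hctr : ∀ g, r = .inr g → (tget C T g 0).isSome) : (src C T l x r 1).isSome := by
  apply src_isSome
  right; right
  rcases r with (_|ar) | gr
  · rw [srcR_rb, if_pos (by omega)]; simp
  · rw [srcR_some, if_pos rfl]; simp
  · rw [srcR_tbl]
    have e : (1 : ℤ) - 1 = 0 := by norm_num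
    rw [e]
    exact hctr gr rfl

lemma src0_some (l x r : Q' C T)
    (H : ¬(l = .inl none ∧ x = .inl none ∧ r = .inl none))
    (hctr : ∀ g, x = .inr g → (tget C T g 0).isSome) : (src C T l x r 0).isSome := by
  apply src_isSome
  right; left
  rcases x with (_|a) | g
  · rw [srcX_rb]
    rcases l with (_|al) | gl
    · rw [isRB_rb, if_neg (by simp)]
      rcases r with (_|ar) | gr
      · exact absurd ⟨rfl, rfl, rfl⟩ H
      · rw [isRB_some, if_pos rfl, if_pos (by omega)]; simp
      · rw [isRB_tbl, if_pos rfl, if_pos (by omega)]; simp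
    · rw [isRB_some, if_pos rfl, if_pos (by omega)]; simp
    · rw [isRB_tbl, if_pos rfl, if_pos (by omega)]; simp
  · rw [srcX_some, if_pos rfl]; simp
  · rw [srcX_tbl]
    exact hctr g rfl

lemma good_step {w : List A} {t : ℕ} (G : Good C T w t) : Good C T w (t+1) := by
  have hrb : ∀ c : ℤ, cfg C T w (t+1) c = .inl none ↔
      ∀ d : ℤ, c - ((t+1 : ℕ) : ℤ) ≤ d → d ≤ c + ((t+1 : ℕ) : ℤ) →
        ¬(0 ≤ d ∧ d < (w.length:ℤ)) := by
    intro c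
    constructor
    · intro h d h1 h2 hw
      have hall : cfg C T w t (c-1) = .inl none ∧ cfg C T w t c = .inl none ∧
          cfg C T w t (c+1) = .inl none := by
        by_contra hc
        rw [cfg_succ, delta'_not_rb C T _ _ _ hc] at h
        injection h
      push_cast at h1 h2
      rcases le_or_gt d (c-1+t) with h' | h'
      · exact (G.rb (c-1)).mp hall.1 d (by omega) (by omega) hw
      · rcases le_or_gt d (c+t) with h'' | h''
        · exact (G.rb c).mp hall.2.1 d (by omega) (by omega) hw
        · exact (G.rb (c+1)).mp hall.2.2 d (by omega) (by omega) hw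
    · intro hall
      rw [cfg_succ]
      have e1 : cfg C T w t (c-1) = .inl none :=
        (G.rb (c-1)).mpr (fun d hd1 hd2 => hall d (by push_cast at hd1 hd2 ⊢; omega)
          (by push_cast at hd1 hd2 ⊢; omega))
      have e2 : cfg C T w t c = .inl none :=
        (G.rb c).mpr (fun d hd1 hd2 => hall d (by push_cast at hd1 hd2 ⊢; omega)
          (by push_cast at hd1 hd2 ⊢; omega))
      have e3 : cfg C T w t (c+1) = .inl none :=
        (G.rb (c+1)).mpr (fun d hd1 hd2 => hall d (by push_cast at hd1 hd2 ⊢; omega)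
          (by push_cast at hd1 hd2 ⊢; omega))
      rw [e1, e2, e3]
      exact delta'_rb C T
  have hform : ∀ c : ℤ, ¬(cfg C T w t (c-1) = .inl none ∧ cfg C T w t c = .inl none ∧
      cfg C T w t (c+1) = .inl none) →
      cfg C T w (t+1) c = .inr (fun o => node C T (cfg C T w t (c-1)) (cfg C T w t c)
        (cfg C T w t (c+1)) ((o:ℤ) - T)) := by
    intro c hc
    rw [cfg_succ]
    exact delta'_not_rb C T _ _ _ hc
  have hH : ∀ (c : ℤ) g, cfg C T w (t+1) c = .inr g →
      ¬(cfg C T w t (c-1) = .inl none ∧ cfg C T w t c = .inl none ∧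
        cfg C T w t (c+1) = .inl none) := by
    intro c g hg hall
    rw [cfg_succ, hall.1, hall.2.1, hall.2.2, delta'_rb] at hg
    injection hg
  constructor
  · exact hrb
  · -- noRaw
    intro c a _
    rw [cfg_succ]
    unfold delta'
    split
    · intro hh; injection hh with hh2; cases hh2
    · intro hh; injection hh
  · -- sound
    intro c g hg j v htg
    have H := hH c g hg
    rw [hform c H] at hg
    injection hg with hg
    rw [← hg] at htg
    rw [tget_build] at htg
    split at htg
    case isFalse => injection htg
    case isTrue hj =>
      obtain ⟨a, b, c', hsa, hsb, hsc, hv⟩ := node_eq_some C T _ _ _ j v htg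
      have ea := src_sound C T G c H (j-1) a hsa
      have eb := src_sound C T G c H j b hsb
      have ec := src_sound C T G c H (j+1) c' hsc
      rw [hv, ea, eb, ec, Row_succ]
      have e1 : c + (j-1) = c + j - 1 := by ring
      have e2 : c + (j+1) = c + j + 1 := by ring
      rw [e1, e2]
  · -- center
    intro c g hg
    have H := hH c g hg
    rw [hform c H] at hg
    injection hg with hg
    rw [← hg, tget_build, if_pos (by constructor <;> omega)]
    have em1 : (0 : ℤ) - 1 = -1 := by norm_num
    have ep1 : (0 : ℤ) + 1 = 1 := by norm_num
    apply node_isSome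
    · rw [em1]
      exact srcm1_some C T _ _ _ (fun g' hg' => G.center (c-1) g' hg')
    · exact src0_some C T _ _ _ H (fun g' hg' => G.center c g' hg')
    · rw [ep1]
      exact src1_some C T _ _ _ (fun g' hg' => G.center (c+1) g' hg')
  · -- lefts
    intro c hn h1 h2
    push_cast at h1 h2
    have H : ¬(cfg C T w t (c-1) = .inl none ∧ cfg C T w t c = .inl none ∧
        cfg C T w t (c+1) = .inl none) := by
      intro hall
      have hz : cfg C T w (t+1) c = .inl none := by
        rw [cfg_succ, hall.1, hall.2.1, hall.2.2]
        exact delta'_rb C T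
      exact (hrb c).mp hz 0 (by push_cast; omega) (by push_cast; omega) ⟨le_refl 0, hn⟩
    refine ⟨_, hform c H, ?_⟩
    intro j hj1 hj2
    rw [tget_build, if_pos ⟨hj1, by omega⟩]
    have key : ∀ i : ℤ, -(T:ℤ)-1 ≤ i → i ≤ 1 →
        (src C T (cfg C T w t (c-1)) (cfg C T w t c) (cfg C T w t (c+1)) i).isSome := by
      intro i hi1 hi2
      rcases lt_or_ge i 0 with hneg | hpos
      · apply src_isSome
        left
        rcases hl : cfg C T w t (c-1) with (_|al) | gl
        · rw [srcL_rb, if_pos (by omega)]; simp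
        · exfalso
          rcases Nat.eq_zero_or_pos t with rfl | ht
          · obtain ⟨h0, _, _⟩ := raw_at C T (c-1) al hl
            omega
          · exact G.noRaw (c-1) al (by omega) hl
        · rw [srcL_tbl]
          have hl0 : 0 ≤ (c-1) + (t:ℤ) := by
            obtain ⟨d₀, hd1, hd2, hd3, _⟩ :=
              notRB_witness C T G (c-1) (by rw [hl]; exact inr_ne C T _)
            omega
          obtain ⟨g', hg', hs⟩ := G.lefts (c-1) hn (by omega) hl0
          rw [hl] at hg'
          injection hg' with hg'
          rw [hg']
          exact hs (i+1) (by omega) (by omega)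
      · interval_cases i
        · exact src0_some C T _ _ _ H (fun g' hg' => G.center c g' hg')
        · exact src1_some C T _ _ _ (fun g' hg' => G.center (c+1) g' hg')
    exact node_isSome C T _ _ _ j (key (j-1) (by omega) (by omega))
      (key j (by omega) (by omega)) (key (j+1) (by omega) (by omega))
  · -- rights
    intro c hn h1 h2
    push_cast at h1 h2
    have H : ¬(cfg C T w t (c-1) = .inl none ∧ cfg C T w t c = .inl none ∧
        cfg C T w t (c+1) = .inl none) := by
      intro hall
      have hz : cfg C T w (t+1) c = .inl none := by
        rw [cfg_succ, hall.1, hall.2.1, hall.2.2]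
        exact delta'_rb C T
      have hempty := (hrb c).mp hz
      rcases le_or_gt 0 (c-(t:ℤ)-1) with h' | h'
      · exact hempty (c-(t:ℤ)-1) (by push_cast; omega) (by push_cast; omega) ⟨h', by omega⟩
      · exact hempty 0 (by push_cast; omega) (by push_cast; omega) ⟨le_refl 0, hn⟩
    refine ⟨_, hform c H, ?_⟩
    intro j hj1 hj2
    rw [tget_build, if_pos ⟨by omega, by omega⟩]
    have key : ∀ i : ℤ, -1 ≤ i → i ≤ (T:ℤ)+1 →
        (src C T (cfg C T w t (c-1)) (cfg C T w t c) (cfg C T w t (c+1)) i).isSome := by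
      intro i hi1 hi2
      rcases lt_or_ge 0 i with hposi | hneg
      · apply src_isSome
        right; right
        rcases hr : cfg C T w t (c+1) with (_|ar) | gr
        · rw [srcR_rb, if_pos (by omega)]; simp
        · exfalso
          rcases Nat.eq_zero_or_pos t with rfl | ht
          · obtain ⟨_, hlt, _⟩ := raw_at C T (c+1) ar hr
            omega
          · exact G.noRaw (c+1) ar (by omega) hr
        · rw [srcR_tbl]
          have hrt : (c+1) - (t:ℤ) ≤ (w.length:ℤ) - 1 := by
            obtain ⟨d₀, hd1, hd2, hd3, hd4⟩ :=
              notRB_witness C T G (c+1) (by rw [hr]; exact inr_ne C T _)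
            omega
          obtain ⟨g', hg', hs⟩ := G.rights (c+1) hn hrt (by omega)
          rw [hr] at hg'
          injection hg' with hg'
          rw [hg']
          exact hs (i-1) (by omega) (by omega)
      · interval_cases i
        · exact srcm1_some C T _ _ _ (fun g' hg' => G.center (c-1) g' hg')
        · exact src0_some C T _ _ _ H (fun g' hg' => G.center c g' hg')
    exact node_isSome C T _ _ _ j (key (j-1) (by omega) (by omega))
      (key j (by omega) (by omega)) (key (j+1) (by omega) (by omega))

lemma good_all (w : List A) (t : ℕ) : Good C T w t := by
  induction t with
  | zero => exact good_zero C T w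
  | succ t ih => exact good_step C T ih

end Invariant

end Speedup

/-- Constant acceleration: for every cellular automaton `C` and constant `T`,
there is a cellular automaton `C'` accepting in real time exactly the words
that `C` accepts in time `|w| + T`, i.e. `L_Id(C') = L_{Id+T}(C)`. -/
theorem stmt_8 (A : Type) [Fintype A] (C : CellAuto A) (T : ℕ) :
    ∃ C' : CellAuto A, ∀ w : List A,
      C'.accepts w w.length ↔ C.accepts w (w.length + T) := by
  refine ⟨Speedup.Cacc C T, fun w => ?_⟩
  by_cases hw : w = []
  · subst hw
    have e1 : (Speedup.Cacc C T).step^[List.length ([] : List A)]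
        ((Speedup.Cacc C T).initConfig []) 0 = Sum.inl none := by
      show Speedup.cfg C T [] 0 0 = _
      rw [Speedup.cfg_zero, dif_neg]
      simp
    have e2 : C.step^[List.length ([] : List A) + T] (C.initConfig []) 0 = C.quiescent :=
      Speedup.Row_nil C (List.length ([] : List A) + T) 0
    unfold CellAuto.accepts
    rw [e1, e2]
    exact Iff.rfl
  · have hn : 1 ≤ ((w.length : ℤ)) := Speedup.len_pos hw
    set n := w.length with hnn
    have G := Speedup.good_all C T w n
    obtain ⟨g, hg, hsL⟩ := G.lefts 0 hn (by omega) (by omega)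
    obtain ⟨g2, hg2, hsR⟩ := G.rights 0 hn (by omega) (by omega)
    rw [hg] at hg2
    injection hg2 with hg2
    rw [← hg2] at hsR
    have hval : ∀ j : ℤ, -(T:ℤ) ≤ j → j ≤ (T:ℤ) →
        (Speedup.tget C T g j).getD C.quiescent = Speedup.Row C w n j := by
      intro j hj1 hj2
      have hsome : (Speedup.tget C T g j).isSome := by
        rcases le_or_gt j 0 with h | h
        · exact hsL j hj1 h
        · exact hsR j (by omega) hj2
      obtain ⟨v, hv⟩ := Option.isSome_iff_exists.mp hsome
      rw [hv]
      have hvv := G.sound 0 g hg j v hv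
      simp only [Option.getD_some]
      rw [hvv]
      congr 1
      omega
    have hdec : C.step^[T] (fun j => (Speedup.tget C T g j).getD C.quiescent) 0
        = C.step^[n + T] (C.initConfig w) 0 := by
      have h1 : C.step^[T] (fun j => (Speedup.tget C T g j).getD C.quiescent) 0
          = C.step^[T] (fun d => Speedup.Row C w n d) 0 := by
        apply Speedup.step_local
        intro j hj1 hj2
        exact hval j (by omega) (by omega)
      rw [h1]
      show C.step^[T] (C.step^[n] (C.initConfig w)) 0 = _
      rw [← Function.iterate_add_apply, Nat.add_comm T n]
    show Speedup.cfg C T w n 0 ∈ (Speedup.Cacc C T).accept ↔ _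
    rw [hg]
    show C.step^[T] (fun j => (Speedup.tget C T g j).getD C.quiescent) 0 ∈ C.accept ↔ _
    rw [hdec]
    exact Iff.rfl
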